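/- If S is a maximal sum-free set in the elementary abelian 2-group G = (ℤ/2ℤ)^n (n ≥ 1) and x ∈ S, then the set H = xS = {xs : s ∈ S} is a subgroup of G of index 2, and S is the complement of H in G. -/

import Mathlib

open Pointwise

/-- A subset `S` of an additive group is sum-free if for all `s₁, s₂ ∈ S`, `s₁ + s₂ ∉ S`. -/
def AddSumFree {G : Type*} [AddGroup G] (S : Set G) : Prop :=
  ∀ a ∈ S, ∀ b ∈ S, a + b ∉ S

/-- A maximal sum-free set: a (nonempty) sum-free set of maximum cardinality
among all sum-free subsets. -/
def IsMaxAddSumFree {G : Type*} [AddGroup G] (S : Set G) : Prop :=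
  S.Nonempty ∧ AddSumFree S ∧ ∀ T : Set G, AddSumFree T → T.ncard ≤ S.ncard

/-- If `S` is a maximal sum-free set in `(ℤ/2ℤ)^n` and `x ∈ S`, then `x + S` is a
subgroup of index 2, and `S` is its complement. -/
theorem maxSumFree_is_complement_two (n : ℕ) (hn : 1 ≤ n) (S : Set (Fin n → ZMod 2))
    (hS : IsMaxAddSumFree S) (x : Fin n → ZMod 2) (hx : x ∈ S) :
    ∃ H : AddSubgroup (Fin n → ZMod 2),
      (H : Set (Fin n → ZMod 2)) = x +ᵥ S ∧ H.index = 2 ∧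
        S = (H : Set (Fin n → ZMod 2))ᶜ := by
  obtain ⟨hne, hsf, hmax⟩ := hS
  have h2 : ∀ a : Fin n → ZMod 2, a + a = 0 := by
    intro a; funext j
    have : ∀ z : ZMod 2, z + z = 0 := by decide
    exact this (a j)
  have hcard : Nat.card (Fin n → ZMod 2) = 2 ^ n := by
    simp [Nat.card_eq_fintype_card]
  have hpow : 2 ^ n = 2 ^ (n - 1) + 2 ^ (n - 1) := by
    have h : n - 1 + 1 = n := Nat.succ_pred_eq_of_pos hn
    calc 2 ^ n = 2 ^ (n - 1 + 1) := by rw [h]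
      _ = 2 ^ (n - 1) + 2 ^ (n - 1) := by rw [pow_succ]; ring
  -- the exemplar sum-free set
  set i : Fin n := ⟨0, hn⟩ with hi
  set T : Set (Fin n → ZMod 2) := {v | v i = 1} with hTdef
  have hTsf : AddSumFree T := by
    intro a ha b hb hab
    simp only [hTdef, Set.mem_setOf_eq, Pi.add_apply] at ha hb hab
    rw [ha, hb] at hab
    exact absurd hab (by decide : ¬ ((1 : ZMod 2) + 1 = 1))
  set e : Fin n → ZMod 2 := fun j => if j = i then 1 else 0 with he
  have himg : (fun v => v + e) '' T = Tᶜ := by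
    ext v
    constructor
    · rintro ⟨t, ht, rfl⟩
      simp only [hTdef, Set.mem_setOf_eq] at ht
      simp only [Set.mem_compl_iff, hTdef, Set.mem_setOf_eq, Pi.add_apply, he, ht,
        if_pos rfl]
      decide
    · intro hv
      refine ⟨v + e, ?_, show v + e + e = v by rw [add_assoc, h2 e, add_zero]⟩
      simp only [Set.mem_compl_iff, hTdef, Set.mem_setOf_eq] at hv
      have hv0 : v i = 0 := by
        have : ∀ z : ZMod 2, z ≠ 1 → z = 0 := by decide
        exact this _ hv
      simp [hTdef, he, hv0]
  have hTc : T.ncard = Tᶜ.ncard := by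
    rw [← himg, Set.ncard_image_of_injective _ (add_left_injective e)]
  have hsum : T.ncard + Tᶜ.ncard = 2 ^ n := by
    rw [Set.ncard_add_ncard_compl]; exact hcard
  have hT : T.ncard = 2 ^ (n - 1) := by omega
  -- disjointness of S and x + S
  have hdisj : Disjoint S (x +ᵥ S) := by
    rw [Set.disjoint_right]
    rintro a ⟨s, hs, rfl⟩ ha
    exact hsf x hx s hs ha
  have himg2 : (fun v => x + v) '' S = x +ᵥ S := by
    ext v
    simp only [Set.mem_image, Set.mem_vadd_set, vadd_eq_add]
  have hvS : (x +ᵥ S).ncard = S.ncard := by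
    rw [← himg2, Set.ncard_image_of_injective _ (add_right_injective x)]
  have hun : (S ∪ (x +ᵥ S)).ncard = S.ncard + S.ncard := by
    rw [Set.ncard_union_eq hdisj (Set.toFinite _) (Set.toFinite _), hvS]
  have hle : (S ∪ (x +ᵥ S)).ncard ≤ 2 ^ n := by
    have := Set.ncard_le_ncard (Set.subset_univ (S ∪ (x +ᵥ S))) (Set.toFinite _)
    rwa [Set.ncard_univ, hcard] at this
  have hSge : 2 ^ (n - 1) ≤ S.ncard := hT ▸ hmax T hTsf
  have hScard : S.ncard = 2 ^ (n - 1) := by omega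
  have huniv : S ∪ (x +ᵥ S) = Set.univ := by
    apply Set.eq_of_subset_of_ncard_le (Set.subset_univ _)
    rw [Set.ncard_univ, hcard]; omega
  have hcompl : x +ᵥ S = Sᶜ := by
    ext a
    constructor
    · intro ha
      exact Set.disjoint_right.mp hdisj ha
    · intro ha
      have : a ∈ S ∪ (x +ᵥ S) := huniv ▸ Set.mem_univ a
      exact this.resolve_left ha
  have h0 : (0 : Fin n → ZMod 2) ∉ S := by
    intro h0
    exact hsf 0 h0 0 h0 (by simpa using h0)
  have hmem0 : (0 : Fin n → ZMod 2) ∈ x +ᵥ S := by rw [hcompl]; exact h0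
  have hmemadd : ∀ a b : Fin n → ZMod 2, a ∈ x +ᵥ S → b ∈ x +ᵥ S →
      a + b ∈ x +ᵥ S := by
    rintro a b ⟨s, hs, rfl⟩ ⟨t, ht, rfl⟩
    have heq : (x +ᵥ s) + (x +ᵥ t) = s + t := by
      show (x + s) + (x + t) = s + t
      calc (x + s) + (x + t) = (x + x) + (s + t) := by ring
        _ = s + t := by rw [h2 x, zero_add]
    rw [heq, hcompl]
    exact hsf s hs t ht
  have hmemneg : ∀ a : Fin n → ZMod 2, a ∈ x +ᵥ S → -a ∈ x +ᵥ S := by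
    intro a ha
    have : -a = a := neg_eq_of_add_eq_zero_left (h2 a)
    rwa [this]
  set H : AddSubgroup (Fin n → ZMod 2) :=
    { carrier := x +ᵥ S
      zero_mem' := hmem0
      add_mem' := fun {a b} ha hb => hmemadd a b ha hb
      neg_mem' := fun {a} ha => hmemneg a ha } with hH
  refine ⟨H, rfl, ?_, ?_⟩
  · have hc : Nat.card H = 2 ^ (n - 1) := by
      have : Nat.card H = Nat.card (x +ᵥ S : Set (Fin n → ZMod 2)) := rfl
      rw [this, Nat.card_coe_set_eq, hvS, hScard]
    have hm := AddSubgroup.index_mul_card H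
    rw [hc, hcard, hpow] at hm
    have hp : 0 < 2 ^ (n - 1) := Nat.pow_pos (by norm_num)
    exact Nat.eq_of_mul_eq_mul_right hp (by omega)
  · show S = (x +ᵥ S)ᶜ
    rw [hcompl, compl_compl]
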